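/- For every n ∈ ℕ, the set of CPDNN quantum channels Φ : M_n(ℂ) → M_2(ℂ) coincides with the set of CPCP quantum channels Φ : M_n(ℂ) → M_2(ℂ): a completely positive trace-preserving linear map Φ : M_n(ℂ) → M_2(ℂ) is CPDNN if and only if it is CPCP. -/

import Mathlib

open Matrix
open scoped ComplexOrder

/-- A complex matrix is completely positive if it is a finite sum of rank-one
matrices `x xᵀ` with `x` a real entrywise nonnegative vector (viewed in `ℂ`). -/
def IsCPMat {ι : Type*} [Fintype ι] (A : Matrix ι ι ℂ) : Prop :=
  ∃ (s : ℕ) (x : Fin s → ι → ℝ), (∀ t i, 0 ≤ x t i) ∧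
    ∀ i j, A i j = ((∑ t, x t i * x t j : ℝ) : ℂ)

/-- A complex matrix is doubly nonnegative if it is positive semidefinite and
every entry is a nonnegative real number. -/
def IsDNNMat {ι : Type*} [Fintype ι] (A : Matrix ι ι ℂ) : Prop :=
  A.PosSemidef ∧ ∀ i j, 0 ≤ (A i j).re ∧ (A i j).im = 0

/-- The map `id_k ⊗ Φ` acting blockwise: the `((a,p),(b,q))` entry of the output
is `Φ(X_{ab})_{pq}`, where `X_{ab}` is the `(a,b)` block of `X`. -/
def idTensor {n m : ℕ} (Φ : Matrix (Fin n) (Fin n) ℂ →ₗ[ℂ] Matrix (Fin m) (Fin m) ℂ)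
    (k : ℕ) (X : Matrix (Fin k × Fin n) (Fin k × Fin n) ℂ) :
    Matrix (Fin k × Fin m) (Fin k × Fin m) ℂ :=
  Matrix.of fun ap bq => Φ (Matrix.of fun i j => X (ap.1, i) (bq.1, j)) ap.2 bq.2

/-- `Φ` is completely positive as a linear map between matrix algebras. -/
def IsCPMap {n m : ℕ} (Φ : Matrix (Fin n) (Fin n) ℂ →ₗ[ℂ] Matrix (Fin m) (Fin m) ℂ) : Prop :=
  ∀ (k : ℕ) (X : Matrix (Fin k × Fin n) (Fin k × Fin n) ℂ),
    X.PosSemidef → (idTensor Φ k X).PosSemidef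

/-- `Φ` is trace-preserving. -/
def IsTP {n m : ℕ} (Φ : Matrix (Fin n) (Fin n) ℂ →ₗ[ℂ] Matrix (Fin m) (Fin m) ℂ) : Prop :=
  ∀ X, (Φ X).trace = X.trace

/-- `Φ` is CPCP: `id_k ⊗ Φ` maps completely positive matrices to completely
positive matrices for every `k`. -/
def IsCPCP {n m : ℕ} (Φ : Matrix (Fin n) (Fin n) ℂ →ₗ[ℂ] Matrix (Fin m) (Fin m) ℂ) : Prop :=
  ∀ (k : ℕ) (X : Matrix (Fin k × Fin n) (Fin k × Fin n) ℂ),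
    IsCPMat X → IsCPMat (idTensor Φ k X)

/-- `Φ` is CPDNN: `id_k ⊗ Φ` maps doubly nonnegative matrices to doubly
nonnegative matrices for every `k`. -/
def IsCPDNN {n m : ℕ} (Φ : Matrix (Fin n) (Fin n) ℂ →ₗ[ℂ] Matrix (Fin m) (Fin m) ℂ) : Prop :=
  ∀ (k : ℕ) (X : Matrix (Fin k × Fin n) (Fin k × Fin n) ℂ),
    IsDNNMat X → IsDNNMat (idTensor Φ k X)

/-- The Choi matrix `J(Φ) = Σ_{i,j} E_{ij} ⊗ Φ(E_{ij})`, with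
`((i,p),(j,q))` entry equal to `Φ(E_{ij})_{pq}`. -/
def choi {n m : ℕ} (Φ : Matrix (Fin n) (Fin n) ℂ →ₗ[ℂ] Matrix (Fin m) (Fin m) ℂ) :
    Matrix (Fin n × Fin m) (Fin n × Fin m) ℂ :=
  Matrix.of fun ip jq => Φ (Matrix.single ip.1 jq.1 1) ip.2 jq.2

private lemma czle (z : ℂ) : 0 ≤ z ↔ 0 ≤ z.re ∧ z.im = 0 := by
  constructor
  · intro h; exact ⟨(Complex.le_def.mp h).1, ((Complex.le_def.mp h).2).symm⟩
  · intro h; exact Complex.le_def.mpr ⟨h.1, h.2.symm⟩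

private lemma phi_entry {n m : ℕ} (Φ : Matrix (Fin n) (Fin n) ℂ →ₗ[ℂ] Matrix (Fin m) (Fin m) ℂ)
    (A : Matrix (Fin n) (Fin n) ℂ) (p q : Fin m) :
    Φ A p q = ∑ i, ∑ j, A i j * Φ (single i j 1) p q := by
  conv_lhs => rw [matrix_eq_sum_single A]
  simp only [map_sum, Matrix.sum_apply]
  refine Finset.sum_congr rfl fun i _ => ?_
  refine Finset.sum_congr rfl fun j _ => ?_
  have h : single i j (A i j) = A i j • single i j 1 := by
    simp [Matrix.smul_single]
  rw [h, _root_.map_smul]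
  simp

private lemma idTensor_entry {n m k : ℕ}
    (Φ : Matrix (Fin n) (Fin n) ℂ →ₗ[ℂ] Matrix (Fin m) (Fin m) ℂ)
    (X : Matrix (Fin k × Fin n) (Fin k × Fin n) ℂ) (a b : Fin k) (p q : Fin m) :
    idTensor Φ k X (a,p) (b,q)
      = ∑ i, ∑ j, X (a,i) (b,j) * Φ (single i j 1) p q := by
  show Φ (Matrix.of fun i j => X (a, i) (b, j)) p q = _
  rw [phi_entry]
  rfl

/-- the rank-one maximally-entangled-type matrix -/
private def X0 (n : ℕ) : Matrix (Fin n × Fin n) (Fin n × Fin n) ℂ :=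
  fun c d => (((if c.1 = c.2 then 1 else 0) * (if d.1 = d.2 then 1 else 0) : ℝ) : ℂ)

private lemma X0_CP (n : ℕ) : IsCPMat (X0 n) := by
  refine ⟨1, fun _ c => if c.1 = c.2 then 1 else 0, ?_, ?_⟩
  · intro t c; dsimp only; split <;> norm_num
  · intro c d
    simp [X0, Fin.sum_univ_one]

private lemma X0_DNN (n : ℕ) : IsDNNMat (X0 n) := by
  refine ⟨posSemidef_iff_dotProduct_mulVec.mpr ⟨?_, ?_⟩, ?_⟩
  · ext c d
    simp [X0, conjTranspose_apply, mul_comm]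
  · intro x
    have key : star x ⬝ᵥ (X0 n) *ᵥ x
        = (starRingEnd ℂ) (∑ d, (if d.1 = d.2 then 1 else 0) * x d)
          * (∑ d, (if d.1 = d.2 then 1 else 0) * x d) := by
      rw [dotProduct, map_sum, Finset.sum_mul]
      refine Finset.sum_congr rfl fun c _ => ?_
      have hmv : (X0 n *ᵥ x) c = ∑ d, X0 n c d * x d := rfl
      rw [hmv, Finset.mul_sum, _root_.map_mul, Finset.mul_sum]
      refine Finset.sum_congr rfl fun d _ => ?_
      simp only [X0, Pi.star_apply, RCLike.star_def]
      push_cast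
      split_ifs <;> simp <;> ring
    rw [key, mul_comm, Complex.mul_conj]
    exact Complex.zero_le_real.mpr (Complex.normSq_nonneg _)
  · intro c d
    simp only [X0]
    constructor
    · push_cast
      split_ifs <;> norm_num
    · push_cast
      split_ifs <;> norm_num

private lemma idTensor_X0 {n m : ℕ}
    (Φ : Matrix (Fin n) (Fin n) ℂ →ₗ[ℂ] Matrix (Fin m) (Fin m) ℂ)
    (i j : Fin n) (p q : Fin m) :
    idTensor Φ n (X0 n) (i,p) (j,q) = Φ (single i j 1) p q := by
  rw [idTensor_entry]
  have h : ∀ i' j' : Fin n, X0 n (i,i') (j,j')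
      = (if i = i' then (1:ℂ) else 0) * (if j = j' then 1 else 0) := by
    intro i' j'
    simp only [X0]
    push_cast
    split_ifs <;> norm_num
  simp only [h, ite_mul, mul_ite, one_mul, zero_mul, mul_zero, mul_one]
  rw [Finset.sum_comm]
  simp [Finset.sum_ite_eq, Finset.mem_univ]

private lemma cpcp_to_cpdnn {n m : ℕ}
    (Φ : Matrix (Fin n) (Fin n) ℂ →ₗ[ℂ] Matrix (Fin m) (Fin m) ℂ)
    (hCP : IsCPMap Φ) (hcpcp : IsCPCP Φ) : IsCPDNN Φ := by
  -- entries of Φ(E_ij) are nonnegative reals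
  have hC : ∀ (i j : Fin n) (p q : Fin m),
      0 ≤ (Φ (single i j 1) p q).re ∧ (Φ (single i j 1) p q).im = 0 := by
    intro i j p q
    obtain ⟨s, x, hx, hxe⟩ := hcpcp n (X0 n) (X0_CP n)
    have h := hxe (i,p) (j,q)
    rw [idTensor_X0] at h
    rw [h]
    constructor
    · simp only [Complex.ofReal_re]
      exact Finset.sum_nonneg fun t _ => mul_nonneg (hx t _) (hx t _)
    · simp
  intro k X hX
  refine ⟨hCP k X hX.1, ?_⟩
  rintro ⟨a,p⟩ ⟨b,q⟩
  rw [idTensor_entry]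
  have h1 : ∀ i j : Fin n, X (a,i) (b,j) * Φ (single i j 1) p q
      = (((X (a,i) (b,j)).re * (Φ (single i j 1) p q).re : ℝ) : ℂ) := by
    intro i j
    have e1 : X (a,i) (b,j) = ((X (a,i) (b,j)).re : ℂ) := by
      apply Complex.ext <;> simp [(hX.2 (a,i) (b,j)).2]
    have e2 : Φ (single i j 1) p q = ((Φ (single i j 1) p q).re : ℂ) := by
      apply Complex.ext <;> simp [(hC i j p q).2]
    conv_lhs => rw [e1, e2]
    norm_cast
  simp only [h1]
  simp only [← Complex.ofReal_sum]
  constructor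
  · simp only [Complex.ofReal_re]
    refine Finset.sum_nonneg fun i _ => Finset.sum_nonneg fun j _ => ?_
    exact mul_nonneg (hX.2 (a,i) (b,j)).1 (hC i j p q).1
  · simp
open Matrix

private lemma qsnoc (N : ℕ) (G : Matrix (Fin (N+1)) (Fin (N+1)) ℝ) (v' : Fin N → ℝ) (t : ℝ) :
    (∑ i, ∑ j, (Fin.snoc v' t : Fin (N+1) → ℝ) i * G i j * (Fin.snoc v' t : Fin (N+1) → ℝ) j) =
    (∑ i : Fin N, ∑ j : Fin N, v' i * G i.castSucc j.castSucc * v' j)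
    + t * ∑ i : Fin N, G i.castSucc (Fin.last N) * v' i
    + t * ∑ j : Fin N, G (Fin.last N) j.castSucc * v' j
    + t * G (Fin.last N) (Fin.last N) * t := by
  simp only [Fin.sum_univ_castSucc, Fin.snoc_castSucc, Fin.snoc_last, Finset.sum_add_distrib]
  have e1 : ∑ i : Fin N, v' i * G i.castSucc (Fin.last N) * t
      = t * ∑ i : Fin N, G i.castSucc (Fin.last N) * v' i := by
    rw [Finset.mul_sum]; exact Finset.sum_congr rfl fun i _ => by ring
  have e2 : ∑ j : Fin N, t * G (Fin.last N) j.castSucc * v' j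
      = t * ∑ j : Fin N, G (Fin.last N) j.castSucc * v' j := by
    rw [Finset.mul_sum]; exact Finset.sum_congr rfl fun j _ => by ring
  rw [e1, e2]; ring

private lemma quad_aux {A B : ℝ} (hA : 0 ≤ A) (h : ∀ s : ℝ, 0 ≤ A * s^2 + 2*(s*B)) : B = 0 := by
  by_contra hB
  have hA1 : (0:ℝ) < A + 1 := by linarith
  have h2 := h (-(B/(A+1)))
  have hx : (B/(A+1))*(A+1) = B := div_mul_cancel₀ B (ne_of_gt hA1)
  have hB2 : 0 < B^2 := by positivity
  nlinarith [h2, hx, hB2, sq_nonneg (B/(A+1)), hA]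

lemma zlemma : ∀ (N : ℕ) (G : Matrix (Fin N) (Fin N) ℝ),
    (∀ i j, G i j = G j i) →
    (∀ v : Fin N → ℝ, 0 ≤ ∑ i, ∑ j, v i * G i j * v j) →
    (∀ i j, i ≠ j → G i j ≤ 0) →
    ∃ w : Fin N → ℝ, (∀ i, 0 < w i) ∧ ∀ i, 0 ≤ ∑ j, G i j * w j := by
  intro N
  induction N with
  | zero => exact fun G _ _ _ => ⟨fun _ => 1, fun i => i.elim0, fun i => i.elim0⟩
  | succ N ih =>
    intro G hsym hpsd hz
    set L := Fin.last N with hL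
    set g : Fin N → ℝ := fun i => G i.castSucc L with hg
    have hcast_ne : ∀ i : Fin N, i.castSucc ≠ L := fun i => (Fin.castSucc_lt_last i).ne
    have hcast_inj : ∀ i j : Fin N, i ≠ j → i.castSucc ≠ j.castSucc :=
      fun i j hij h => hij (Fin.castSucc_injective N h)
    have hgle : ∀ i, g i ≤ 0 := fun i => hz _ _ (hcast_ne i)
    have hdiag : ∀ i : Fin (N+1), 0 ≤ G i i := by
      intro i
      have h0 := hpsd (fun k => if k = i then 1 else 0)
      simpa [Finset.sum_ite_eq', Finset.mem_univ] using h0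
    rcases eq_or_lt_of_le (hdiag L) with haz | hapos
    · -- G L L = 0 : last row/col of G vanishes
      have hrow : ∀ i : Fin N, g i = 0 := by
        intro i
        apply quad_aux (hdiag i.castSucc)
        intro s
        have h0 := hpsd (Fin.snoc (fun k => if k = i then s else 0) 1)
        rw [qsnoc] at h0
        have e1 : ∑ k : Fin N, G k.castSucc L * (if k = i then s else 0) = g i * s := by
          simp [hg, Finset.sum_ite_eq', Finset.mem_univ, mul_comm]
        have e2 : ∑ k : Fin N, G L k.castSucc * (if k = i then s else 0) = g i * s := by
          have : ∀ k : Fin N, G L k.castSucc = G k.castSucc L := fun k => hsym _ _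
          simp [hg, this, Finset.sum_ite_eq', Finset.mem_univ, mul_comm]
        have e3 : ∑ k : Fin N, ∑ l : Fin N,
            (if k = i then s else 0) * G k.castSucc l.castSucc * (if l = i then s else 0)
            = G i.castSucc i.castSucc * s^2 := by
          simp [Finset.sum_ite_eq', Finset.mem_univ, ite_mul, mul_ite]
          ring
        rw [e1, e2, e3, ← haz] at h0
        calc (0:ℝ) ≤ G i.castSucc i.castSucc * s^2 + 1 * (g i * s) + 1 * (g i * s) + 1 * 0 * 1 := h0
        _ = G i.castSucc i.castSucc * s ^ 2 + 2 * (s * g i) := by ring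
      -- recurse on the principal submatrix
      obtain ⟨w', hw'pos, hw'row⟩ := ih (fun i j => G i.castSucc j.castSucc)
        (fun i j => hsym _ _)
        (by
          intro v'
          have h0 := hpsd (Fin.snoc v' 0)
          rw [qsnoc] at h0
          simpa using h0)
        (fun i j hij => hz _ _ (hcast_inj i j hij))
      refine ⟨Fin.snoc w' 1, ?_, ?_⟩
      · intro i
        refine Fin.lastCases ?_ ?_ i
        · simp
        · intro i; simpa using hw'pos i
      · intro i
        refine Fin.lastCases ?_ ?_ i
        · rw [Fin.sum_univ_castSucc]
          have : ∀ j : Fin N, G L j.castSucc = 0 := fun j => by rw [hsym]; exact hrow j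
          simp [this, Fin.snoc_castSucc, Fin.snoc_last, ← haz, ← hL]
        · intro i
          rw [Fin.sum_univ_castSucc]
          simp only [Fin.snoc_castSucc, Fin.snoc_last]
          have := hw'row i
          have hgi := hrow i
          simp only [hg] at hgi
          rw [hgi]
          simpa using this
    · -- G L L > 0 : Schur complement
      set a := G L L with ha
      set Gt : Matrix (Fin N) (Fin N) ℝ := fun i j => G i.castSucc j.castSucc - g i * g j / a
        with hGt
      have hGtsym : ∀ i j, Gt i j = Gt j i := by
        intro i j; simp only [hGt]; rw [hsym]; ring
      have hGtz : ∀ i j, i ≠ j → Gt i j ≤ 0 := by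
        intro i j hij
        have h1 : G i.castSucc j.castSucc ≤ 0 := hz _ _ (hcast_inj i j hij)
        have h2 : 0 ≤ g i * g j := by
          rw [← neg_mul_neg]
          exact mul_nonneg (by linarith [hgle i]) (by linarith [hgle j])
        have h3 : 0 ≤ g i * g j / a := div_nonneg h2 (le_of_lt hapos)
        simp only [hGt]; linarith
      have expand : ∀ v' : Fin N → ℝ, ∑ i, ∑ j, v' i * Gt i j * v' j
          = (∑ i, ∑ j, v' i * G i.castSucc j.castSucc * v' j)
            - (∑ i, g i * v' i) * (∑ j, g j * v' j) / a := by
        intro v'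
        have e : (∑ i, g i * v' i) * (∑ j, g j * v' j) / a
            = ∑ i, ∑ j, v' i * (g i * g j / a) * v' j := by
          rw [Finset.sum_mul_sum, Finset.sum_div]
          refine Finset.sum_congr rfl fun i _ => ?_
          rw [Finset.sum_div]
          exact Finset.sum_congr rfl fun j _ => by ring
        rw [e, ← Finset.sum_sub_distrib]
        refine Finset.sum_congr rfl fun i _ => ?_
        rw [← Finset.sum_sub_distrib]
        refine Finset.sum_congr rfl fun j _ => ?_
        simp only [hGt]; ring
      have hGtpsd : ∀ v' : Fin N → ℝ, 0 ≤ ∑ i, ∑ j, v' i * Gt i j * v' j := by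
        intro v'
        rw [expand v']
        have h0 := hpsd (Fin.snoc v' (-((∑ i, g i * v' i)/a)))
        rw [qsnoc] at h0
        have e1 : ∑ i : Fin N, G i.castSucc (Fin.last N) * v' i = ∑ i, g i * v' i := rfl
        have e2 : ∑ j : Fin N, G (Fin.last N) j.castSucc * v' j = ∑ i, g i * v' i :=
          Finset.sum_congr rfl fun j _ => by rw [hsym]
        have e3 : G (Fin.last N) (Fin.last N) = a := by rw [ha]
        rw [e1, e2, e3] at h0
        have han : a ≠ 0 := ne_of_gt hapos
        have key : (-(((∑ i, g i * v' i))/a)) * (∑ i, g i * v' i)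
            + (-(((∑ i, g i * v' i))/a)) * (∑ i, g i * v' i)
            + (-(((∑ i, g i * v' i))/a)) * a * (-(((∑ i, g i * v' i))/a))
            = -((∑ i, g i * v' i) * (∑ j, g j * v' j) / a) := by
          field_simp; ring
        linarith [h0, key]
      obtain ⟨w', hw'pos, hw'row⟩ := ih Gt hGtsym hGtpsd hGtz
      have hSle : (∑ i, g i * w' i) ≤ 0 := by
        apply Finset.sum_nonpos
        intro i _
        exact mul_nonpos_of_nonpos_of_nonneg (hgle i) (le_of_lt (hw'pos i))
      have hrowG : ∀ i : Fin N, ∑ j, G i.castSucc j.castSucc * w' j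
          = (∑ j, Gt i j * w' j) + g i * (∑ j, g j * w' j) / a := by
        intro i
        have e : g i * (∑ j, g j * w' j) / a = ∑ j, (g i * g j / a) * w' j := by
          rw [Finset.mul_sum, Finset.sum_div]
          exact Finset.sum_congr rfl fun j _ => by ring
        rw [e, ← Finset.sum_add_distrib]
        refine Finset.sum_congr rfl fun j _ => ?_
        simp only [hGt]; ring
      by_cases hall : ∀ i, g i = 0
      · refine ⟨Fin.snoc w' 1, ?_, ?_⟩
        · intro i
          refine Fin.lastCases ?_ ?_ i
          · simp
          · intro i; simpa using hw'pos i
        · intro i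
          refine Fin.lastCases ?_ ?_ i
          · rw [Fin.sum_univ_castSucc]
            have e : ∀ j : Fin N, G (Fin.last N) j.castSucc = 0 := fun j => by
              rw [hsym]; exact hall j
            simp only [e, Fin.snoc_castSucc, Fin.snoc_last, zero_mul, Finset.sum_const_zero,
              zero_add, mul_one]
            rw [← ha]
            exact le_of_lt hapos
          · intro i
            rw [Fin.sum_univ_castSucc]
            simp only [Fin.snoc_castSucc, Fin.snoc_last]
            rw [hrowG i]
            have hgi : G i.castSucc (Fin.last N) = 0 := hall i
            rw [hgi]
            have hgi' : g i = 0 := hall i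
            rw [hgi']
            simpa using hw'row i
      · push_neg at hall
        obtain ⟨i0, hi0⟩ := hall
        have hSneg : (∑ i, g i * w' i) < 0 := by
          have hz0 : ∑ i : Fin N, (0:ℝ) = 0 := by simp
          rw [← hz0]
          apply Finset.sum_lt_sum
          · intro i _
            exact mul_nonpos_of_nonpos_of_nonneg (hgle i) (le_of_lt (hw'pos i))
          · exact ⟨i0, Finset.mem_univ i0,
              mul_neg_of_neg_of_pos (lt_of_le_of_ne (hgle i0) hi0) (hw'pos i0)⟩
        have ht : 0 < -((∑ i, g i * w' i)/a) := by
          have := div_neg_of_neg_of_pos hSneg hapos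
          linarith
        have han : a ≠ 0 := ne_of_gt hapos
        refine ⟨Fin.snoc w' (-((∑ i, g i * w' i)/a)), ?_, ?_⟩
        · intro i
          refine Fin.lastCases ?_ ?_ i
          · simpa using ht
          · intro i; simpa using hw'pos i
        · intro i
          refine Fin.lastCases ?_ ?_ i
          · rw [Fin.sum_univ_castSucc]
            simp only [Fin.snoc_castSucc, Fin.snoc_last]
            have e2 : ∑ j : Fin N, G (Fin.last N) j.castSucc * w' j = ∑ i, g i * w' i :=
              Finset.sum_congr rfl fun j _ => by rw [hsym]
            rw [e2]
            have e3 : G (Fin.last N) (Fin.last N) = a := by rw [ha]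
            rw [e3]
            have : (∑ i, g i * w' i) + a * -((∑ i, g i * w' i) / a) = 0 := by
              field_simp
              ring
            linarith [this]
          · intro i
            rw [Fin.sum_univ_castSucc]
            simp only [Fin.snoc_castSucc, Fin.snoc_last]
            rw [hrowG i]
            have hgc : G i.castSucc (Fin.last N) = g i := rfl
            rw [hgc]
            have hcanc : g i * (∑ j, g j * w' j) / a + g i * -((∑ j, g j * w' j) / a) = 0 := by
              field_simp
              ring
            have := hw'row i
            linarith [this, hcanc]

section dir2
variable {n : ℕ} (Φ : Matrix (Fin n) (Fin n) ℂ →ₗ[ℂ] Matrix (Fin 2) (Fin 2) ℂ)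

private lemma dot_expand {ι : Type*} [Fintype ι] (M : Matrix ι ι ℂ) (x : ι → ℂ) :
    star x ⬝ᵥ M *ᵥ x = ∑ c, ∑ d, star (x c) * M c d * x d := by
  rw [dotProduct]
  refine Finset.sum_congr rfl fun c _ => ?_
  rw [show (M *ᵥ x) c = ∑ d, M c d * x d from rfl, Finset.mul_sum]
  exact Finset.sum_congr rfl fun d _ => by simp only [Pi.star_apply]; ring

private lemma cpdnn_to_cpcp
    (hCP : IsCPMap Φ) (hTP : IsTP Φ) (hdnn : IsCPDNN Φ) : IsCPCP Φ := by
  classical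
  -- the Choi matrix entries are nonnegative reals
  set γ : Fin n → Fin 2 → Fin n → Fin 2 → ℝ :=
    fun i p j q => (Φ (single i j 1) p q).re with hγdef
  have hdnnC := hdnn n (X0 n) (X0_DNN n)
  have hγ : ∀ i p j q, Φ (single i j 1) p q = ((γ i p j q : ℝ) : ℂ) := by
    intro i p j q
    have h2 := (hdnnC.2 (i,p) (j,q))
    rw [idTensor_X0] at h2
    apply Complex.ext <;> simp [hγdef, h2.2]
  have hγnn : ∀ i p j q, 0 ≤ γ i p j q := by
    intro i p j q
    have h2 := (hdnnC.2 (i,p) (j,q))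
    rw [idTensor_X0] at h2
    exact h2.1
  have hγsym : ∀ i p j q, γ i p j q = γ j q i p := by
    intro i p j q
    have hherm := hdnnC.1.1
    have := congrFun (congrFun hherm (j,q)) (i,p)
    rw [conjTranspose_apply, idTensor_X0, idTensor_X0, hγ, hγ] at this
    have := congrArg Complex.re this
    simpa using this
  have hγzero : ∀ i j, i ≠ j → ∀ p, γ i p j p = 0 := by
    intro i j hij
    have htr := hTP (single i j 1)
    have htr2 : Matrix.trace (single i j 1 : Matrix (Fin n) (Fin n) ℂ) = 0 := by
      rw [Matrix.trace]
      apply Finset.sum_eq_zero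
      intro p _
      simp [Matrix.diag, Matrix.single, hij]
      intro h; exact fun h2 => hij (h ▸ h2 ▸ rfl)
    rw [htr2, Matrix.trace] at htr
    have hsum : γ i 0 j 0 + γ i 1 j 1 = 0 := by
      have : ∑ p : Fin 2, Φ (single i j 1) p p = 0 := htr
      rw [Fin.sum_univ_two, hγ, hγ] at this
      exact_mod_cast this
    have h0 : γ i 0 j 0 = 0 := by linarith [hγnn i 0 j 0, hγnn i 1 j 1]
    have h1 : γ i 1 j 1 = 0 := by linarith [hγnn i 0 j 0, hγnn i 1 j 1]
    intro p; fin_cases p <;> assumption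
  -- the sign matrix and the Z-matrix lemma
  set sgn : Fin 2 → ℝ := fun p => if p = 0 then 1 else -1 with hsgn
  have hsgn_sq : ∀ p, sgn p * sgn p = 1 := by
    intro p; fin_cases p <;> norm_num [hsgn]
  have hsgn0 : sgn 0 = 1 := by norm_num [hsgn]
  have hsgn1 : sgn 1 = -1 := by norm_num [hsgn]
  set G : Matrix (Fin n × Fin 2) (Fin n × Fin 2) ℝ :=
    fun c d => sgn c.2 * sgn d.2 * γ c.1 c.2 d.1 d.2 with hG
  have hGsym : ∀ c d, G c d = G d c := by
    rintro ⟨i,p⟩ ⟨j,q⟩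
    simp only [hG]
    rw [hγsym]
    ring
  have hGz : ∀ c d, c ≠ d → G c d ≤ 0 := by
    rintro ⟨i,p⟩ ⟨j,q⟩ hcd
    by_cases hpq : p = q
    · subst hpq
      have hij : i ≠ j := fun h => hcd (by rw [h])
      simp only [hG]
      rw [hγzero i j hij p]
      simp
    · have : sgn p * sgn q = -1 := by
        fin_cases p <;> fin_cases q <;> simp [hsgn] at hpq ⊢
      simp only [hG, this]
      have := hγnn i p j q
      linarith
  have hGpsd : ∀ v : Fin n × Fin 2 → ℝ, 0 ≤ ∑ c, ∑ d, v c * G c d * v d := by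
    intro v
    have hpsd := hdnnC.1.dotProduct_mulVec_nonneg (fun c => ((sgn c.2 * v c : ℝ) : ℂ))
    rw [czle] at hpsd
    have keyc : star (fun c : Fin n × Fin 2 => ((sgn c.2 * v c : ℝ) : ℂ)) ⬝ᵥ
        (idTensor Φ n (X0 n)) *ᵥ (fun c => ((sgn c.2 * v c : ℝ) : ℂ))
        = ((∑ c, ∑ d, v c * G c d * v d : ℝ) : ℂ) := by
      rw [dot_expand]
      rw [Complex.ofReal_sum]
      refine Finset.sum_congr rfl fun c _ => ?_
      rw [Complex.ofReal_sum]
      refine Finset.sum_congr rfl fun d _ => ?_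
      have he : (idTensor Φ n (X0 n)) c d = ((γ c.1 c.2 d.1 d.2 : ℝ) : ℂ) := by
        obtain ⟨i,p⟩ := c; obtain ⟨j,q⟩ := d
        rw [idTensor_X0, hγ]
      rw [he]
      simp only [hG, Pi.star_apply, RCLike.star_def, Complex.conj_ofReal]
      push_cast
      ring
    rw [keyc] at hpsd
    simpa using hpsd.1
  -- transfer to `Fin` and apply the Z-matrix lemma
  obtain ⟨w, hwpos, hwrow⟩ : ∃ w : Fin n × Fin 2 → ℝ,
      (∀ c, 0 < w c) ∧ ∀ c, 0 ≤ ∑ d, G c d * w d := by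
    set e := (Fintype.equivFin (Fin n × Fin 2)) with he
    obtain ⟨w', hw'1, hw'2⟩ := zlemma (Fintype.card (Fin n × Fin 2))
      (fun i j => G (e.symm i) (e.symm j))
      (fun i j => hGsym _ _)
      (by
        intro v
        have := hGpsd (fun c => v (e c))
        calc (0:ℝ) ≤ ∑ c, ∑ d, v (e c) * G c d * v (e d) := this
          _ = ∑ i, ∑ j, v i * G (e.symm i) (e.symm j) * v j := by
            rw [← Equiv.sum_comp e (fun i => ∑ j, v i * G (e.symm i) (e.symm j) * v j)]
            refine Finset.sum_congr rfl fun c _ => ?_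
            rw [← Equiv.sum_comp e (fun j => v (e c) * G (e.symm (e c)) (e.symm j) * v j)]
            simp)
      (fun i j hij => hGz _ _ (fun h => hij (by
        have := congrArg e h; simpa using this)))
    refine ⟨fun c => w' (e c), fun c => hw'1 _, ?_⟩
    intro c
    have := hw'2 (e c)
    calc (0:ℝ) ≤ ∑ j, G (e.symm (e c)) (e.symm j) * w' j := this
      _ = ∑ d, G c d * w' (e d) := by
        rw [← Equiv.sum_comp e (fun j => G (e.symm (e c)) (e.symm j) * w' j)]
        simp
  -- row inequalities
  have hrow0 : ∀ i, ∑ j, γ i 0 j 1 * w (j,1) ≤ γ i 0 i 0 * w (i,0) := by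
    intro i
    have h := hwrow (i,0)
    rw [Fintype.sum_prod_type] at h
    have e : ∀ j : Fin n, (∑ q, G (i,0) (j,q) * w (j,q))
        = (if j = i then γ i 0 i 0 * w (i,0) else 0) - γ i 0 j 1 * w (j,1) := by
      intro j
      rw [Fin.sum_univ_two]
      have e1 : G (i,0) (j,(0:Fin 2)) = γ i 0 j 0 := by
        simp only [hG]; rw [hsgn0]; ring
      have e2 : G (i,0) (j,(1:Fin 2)) = -(γ i 0 j 1) := by
        simp only [hG]; rw [hsgn0, hsgn1]; ring
      rw [e1, e2]
      by_cases hij : j = i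
      · subst hij; simp only [eq_self_iff_true, if_true]; ring
      · rw [hγzero i j (fun h => hij h.symm) 0, if_neg hij]; ring
    rw [Finset.sum_congr rfl (fun j _ => e j), Finset.sum_sub_distrib] at h
    simp only [Finset.sum_ite_eq', Finset.mem_univ, if_pos] at h
    linarith
  have hrow1 : ∀ j, ∑ i, γ i 0 j 1 * w (i,0) ≤ γ j 1 j 1 * w (j,1) := by
    intro j
    have h := hwrow (j,1)
    rw [Fintype.sum_prod_type] at h
    have e : ∀ i : Fin n, (∑ q, G (j,1) (i,q) * w (i,q))
        = (if i = j then γ j 1 j 1 * w (j,1) else 0) - γ i 0 j 1 * w (i,0) := by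
      intro i
      rw [Fin.sum_univ_two]
      have e1 : G (j,1) (i,(0:Fin 2)) = -(γ i 0 j 1) := by
        simp only [hG]; rw [hsgn0, hsgn1, hγsym j 1 i 0]; ring
      have e2 : G (j,1) (i,(1:Fin 2)) = γ j 1 i 1 := by
        simp only [hG]; rw [hsgn1]; ring
      rw [e1, e2]
      by_cases hij : i = j
      · subst hij; simp only [eq_self_iff_true, if_true]; ring
      · rw [hγzero j i (fun h => hij h.symm) 1, if_neg hij]; ring
    rw [Finset.sum_congr rfl (fun i _ => e i), Finset.sum_sub_distrib] at h
    simp only [Finset.sum_ite_eq', Finset.mem_univ, if_pos] at h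
    linarith
  -- the allocation
  set α : Fin n → Fin n → ℝ := fun i j => γ i 0 j 1 * w (j,1) / w (i,0) with hα
  set β : Fin n → Fin n → ℝ := fun i j => γ i 0 j 1 * w (i,0) / w (j,1) with hβ
  have hαnn : ∀ i j, 0 ≤ α i j := fun i j =>
    div_nonneg (mul_nonneg (hγnn i 0 j 1) (hwpos (j,1)).le) (hwpos (i,0)).le
  have hβnn : ∀ i j, 0 ≤ β i j := fun i j =>
    div_nonneg (mul_nonneg (hγnn i 0 j 1) (hwpos (i,0)).le) (hwpos (j,1)).le
  have hαsum : ∀ i, ∑ j, α i j ≤ γ i 0 i 0 := by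
    intro i
    have : ∑ j, α i j = (∑ j, γ i 0 j 1 * w (j,1)) / w (i,0) := by
      rw [Finset.sum_div]
    rw [this, div_le_iff₀ (hwpos (i,0))]
    exact hrow0 i
  have hβsum : ∀ j, ∑ i, β i j ≤ γ j 1 j 1 := by
    intro j
    have : ∑ i, β i j = (∑ i, γ i 0 j 1 * w (i,0)) / w (j,1) := by
      rw [Finset.sum_div]
    rw [this, div_le_iff₀ (hwpos (j,1))]
    exact hrow1 j
  have hαβ : ∀ i j, Real.sqrt (α i j) * Real.sqrt (β i j) = γ i 0 j 1 := by
    intro i j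
    rw [← Real.sqrt_mul (hαnn i j)]
    have : α i j * β i j = (γ i 0 j 1)^2 := by
      rw [hα, hβ]
      have h1 : w (i,0) ≠ 0 := (hwpos (i,0)).ne'
      have h2 : w (j,1) ≠ 0 := (hwpos (j,1)).ne'
      field_simp
    rw [this, Real.sqrt_sq (hγnn i 0 j 1)]
  have h01 : ¬ ((0:Fin 2) = 1) := by decide
  have h10 : ¬ ((1:Fin 2) = 0) := by decide
  -- the nonnegative square-root vectors
  set y : ((Fin n × Fin n) ⊕ (Fin n ⊕ Fin n)) → Fin n → Fin 2 → ℝ :=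
    Sum.elim
      (fun uv k p =>
        (if k = uv.1 ∧ p = 0 then Real.sqrt (α uv.1 uv.2) else 0)
        + (if k = uv.2 ∧ p = 1 then Real.sqrt (β uv.1 uv.2) else 0))
      (Sum.elim
        (fun u k p => if k = u ∧ p = 0 then Real.sqrt (γ u 0 u 0 - ∑ v, α u v) else 0)
        (fun v k p => if k = v ∧ p = 1 then Real.sqrt (γ v 1 v 1 - ∑ u, β u v) else 0))
    with hy
  have hynn : ∀ t k p, 0 ≤ y t k p := by
    rintro (⟨u,v⟩ | (u | v)) k p <;> simp only [hy, Sum.elim_inl, Sum.elim_inr] <;>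
      split_ifs <;> positivity
  have hyl0 : ∀ u v k, y (Sum.inl (u,v)) k 0 = if k = u then Real.sqrt (α u v) else 0 := by
    intro u v k; simp [hy, h01]
  have hyl1 : ∀ u v k, y (Sum.inl (u,v)) k 1 = if k = v then Real.sqrt (β u v) else 0 := by
    intro u v k; simp [hy, h10]
  have hys00 : ∀ u k, y (Sum.inr (Sum.inl u)) k 0
      = if k = u then Real.sqrt (γ u 0 u 0 - ∑ v, α u v) else 0 := by
    intro u k; simp [hy]
  have hys01 : ∀ u k, y (Sum.inr (Sum.inl u)) k 1 = 0 := by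
    intro u k; simp [hy, h10]
  have hys10 : ∀ v k, y (Sum.inr (Sum.inr v)) k 0 = 0 := by
    intro v k; simp [hy, h01]
  have hys11 : ∀ v k, y (Sum.inr (Sum.inr v)) k 1
      = if k = v then Real.sqrt (γ v 1 v 1 - ∑ u, β u v) else 0 := by
    intro v k; simp [hy]
  -- the key Gram identity
  have key : ∀ i p j q, (∑ t, y t i p * y t j q) = γ i p j q := by
    intro i p j q
    rw [Fintype.sum_sum_type, Fintype.sum_sum_type, Fintype.sum_prod_type]
    fin_cases p <;> fin_cases q <;> simp only [Fin.zero_eta, Fin.mk_one]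
    · -- p = 0, q = 0
      simp only [hyl0, hys00, hys10, mul_zero, zero_mul, Finset.sum_const_zero, add_zero]
      by_cases hij : i = j
      · subst hij
        have e1 : ∀ u : Fin n, ∑ v : Fin n,
            (if i = u then Real.sqrt (α u v) else 0) * (if i = u then Real.sqrt (α u v) else 0)
            = if i = u then ∑ v, α u v else 0 := by
          intro u
          by_cases hu : i = u
          · subst hu
            simp only [eq_self_iff_true, if_true]
            exact Finset.sum_congr rfl fun v _ => Real.mul_self_sqrt (hαnn i v)
          · simp [hu]
        rw [Finset.sum_congr rfl fun u _ => e1 u]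
        simp only [Finset.sum_ite_eq, Finset.mem_univ, if_true]
        have e2 : (if i = i then Real.sqrt (γ i 0 i 0 - ∑ v, α i v) else 0)
            * (if i = i then Real.sqrt (γ i 0 i 0 - ∑ v, α i v) else 0)
            = γ i 0 i 0 - ∑ v, α i v := by
          rw [if_pos rfl, Real.mul_self_sqrt (by linarith [hαsum i])]
        have e3 : ∑ u : Fin n, (if i = u then Real.sqrt (γ u 0 u 0 - ∑ v, α u v) else 0)
            * (if i = u then Real.sqrt (γ u 0 u 0 - ∑ v, α u v) else 0)
            = γ i 0 i 0 - ∑ v, α i v := by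
          rw [Finset.sum_eq_single i]
          · rw [e2]
          · intro u _ hu; rw [if_neg (fun h => hu h.symm)]; ring
          · intro h; exact absurd (Finset.mem_univ i) h
        rw [e3]
        ring
      · have e1 : ∀ u v : Fin n,
            (if i = u then Real.sqrt (α u v) else 0) * (if j = u then Real.sqrt (α u v) else 0)
            = 0 := by
          intro u v
          by_cases hu : i = u
          · rw [if_neg (show ¬ j = u from fun h => hij (hu.trans h.symm))]; ring
          · rw [if_neg hu]; ring
        have e2 : ∀ u : Fin n,
            (if i = u then Real.sqrt (γ u 0 u 0 - ∑ v, α u v) else 0)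
            * (if j = u then Real.sqrt (γ u 0 u 0 - ∑ v, α u v) else 0) = 0 := by
          intro u
          by_cases hu : i = u
          · rw [if_neg (show ¬ j = u from fun h => hij (hu.trans h.symm))]; ring
          · rw [if_neg hu]; ring
        simp only [e1, e2, Finset.sum_const_zero, add_zero, zero_add]
        exact (hγzero i j hij 0).symm
    · -- p = 0, q = 1
      simp only [hyl0, hyl1, hys00, hys01, hys10, hys11, mul_zero, zero_mul,
        Finset.sum_const_zero, add_zero, zero_add]
      have e1 : ∀ u : Fin n, ∑ v : Fin n,
          (if i = u then Real.sqrt (α u v) else 0) * (if j = v then Real.sqrt (β u v) else 0)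
          = if i = u then Real.sqrt (α u j) * Real.sqrt (β u j) else 0 := by
        intro u
        by_cases hu : i = u
        · subst hu
          simp only [eq_self_iff_true, if_true]
          rw [Finset.sum_eq_single j]
          · rw [if_pos rfl]
          · intro v _ hv; rw [if_neg (fun h => hv h.symm)]; ring
          · intro h; exact absurd (Finset.mem_univ j) h
        · simp [hu]
      rw [Finset.sum_congr rfl fun u _ => e1 u]
      rw [Finset.sum_eq_single i]
      · rw [if_pos rfl, hαβ]
      · intro u _ hu; rw [if_neg (fun h => hu h.symm)]
      · intro h; exact absurd (Finset.mem_univ i) h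
    · -- p = 1, q = 0
      simp only [hyl0, hyl1, hys00, hys01, hys10, hys11, mul_zero, zero_mul,
        Finset.sum_const_zero, add_zero, zero_add]
      have e1 : ∀ u : Fin n, ∑ v : Fin n,
          (if i = v then Real.sqrt (β u v) else 0) * (if j = u then Real.sqrt (α u v) else 0)
          = if j = u then Real.sqrt (β u i) * Real.sqrt (α u i) else 0 := by
        intro u
        by_cases hu : j = u
        · subst hu
          simp only [eq_self_iff_true, if_true]
          rw [Finset.sum_eq_single i]
          · rw [if_pos rfl]
          · intro v _ hv; rw [if_neg (fun h => hv h.symm)]; ring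
          · intro h; exact absurd (Finset.mem_univ i) h
        · simp [hu]
      rw [Finset.sum_congr rfl fun u _ => e1 u]
      rw [Finset.sum_eq_single j]
      · rw [if_pos rfl, mul_comm, hαβ]
        rw [hγsym]
      · intro u _ hu; rw [if_neg (fun h => hu h.symm)]
      · intro h; exact absurd (Finset.mem_univ j) h
    · -- p = 1, q = 1
      simp only [hyl1, hys01, hys11, mul_zero, zero_mul, Finset.sum_const_zero, zero_add]
      by_cases hij : i = j
      · subst hij
        have e1 : ∀ u : Fin n, ∑ v : Fin n,
            (if i = v then Real.sqrt (β u v) else 0) * (if i = v then Real.sqrt (β u v) else 0)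
            = β u i := by
          intro u
          rw [Finset.sum_eq_single i]
          · rw [if_pos rfl, Real.mul_self_sqrt (hβnn u i)]
          · intro v _ hv; rw [if_neg (fun h => hv h.symm)]; ring
          · intro h; exact absurd (Finset.mem_univ i) h
        rw [Finset.sum_congr rfl fun u _ => e1 u]
        have e3 : ∑ v : Fin n, (if i = v then Real.sqrt (γ v 1 v 1 - ∑ u, β u v) else 0)
            * (if i = v then Real.sqrt (γ v 1 v 1 - ∑ u, β u v) else 0)
            = γ i 1 i 1 - ∑ u, β u i := by
          rw [Finset.sum_eq_single i]
          · rw [if_pos rfl, Real.mul_self_sqrt (by linarith [hβsum i])]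
          · intro v _ hv; rw [if_neg (fun h => hv h.symm)]; ring
          · intro h; exact absurd (Finset.mem_univ i) h
        rw [e3]
        ring
      · have e1 : ∀ u v : Fin n,
            (if i = v then Real.sqrt (β u v) else 0) * (if j = v then Real.sqrt (β u v) else 0)
            = 0 := by
          intro u v
          by_cases hv : i = v
          · rw [if_neg (show ¬ j = v from fun h => hij (hv.trans h.symm))]; ring
          · rw [if_neg hv]; ring
        have e2 : ∀ v : Fin n,
            (if i = v then Real.sqrt (γ v 1 v 1 - ∑ u, β u v) else 0)
            * (if j = v then Real.sqrt (γ v 1 v 1 - ∑ u, β u v) else 0) = 0 := by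
          intro v
          by_cases hv : i = v
          · rw [if_neg (show ¬ j = v from fun h => hij (hv.trans h.symm))]; ring
          · rw [if_neg hv]; ring
        simp only [e1, e2, Finset.sum_const_zero, add_zero]
        exact (hγzero i j hij 1).symm
  -- assemble: the output of `idTensor` on a CP matrix is CP
  intro k X hX
  obtain ⟨s, x, hxnn, hxe⟩ := hX
  have swap4 : ∀ (F : Fin n → Fin n → Fin s → ((Fin n × Fin n) ⊕ (Fin n ⊕ Fin n)) → ℝ),
      ∑ i, ∑ j, ∑ σ, ∑ t, F i j σ t = ∑ σ, ∑ t, ∑ i, ∑ j, F i j σ t := by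
    intro F
    calc ∑ i, ∑ j, ∑ σ, ∑ t, F i j σ t
        = ∑ i, ∑ σ, ∑ j, ∑ t, F i j σ t :=
          Finset.sum_congr rfl fun i _ => Finset.sum_comm
      _ = ∑ σ, ∑ i, ∑ j, ∑ t, F i j σ t := Finset.sum_comm
      _ = ∑ σ, ∑ i, ∑ t, ∑ j, F i j σ t :=
          Finset.sum_congr rfl fun σ _ => Finset.sum_congr rfl fun i _ =>
            Finset.sum_comm
      _ = ∑ σ, ∑ t, ∑ i, ∑ j, F i j σ t :=
          Finset.sum_congr rfl fun σ _ => Finset.sum_comm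
  let e := Fintype.equivFin (Fin s × ((Fin n × Fin n) ⊕ (Fin n ⊕ Fin n)))
  refine ⟨Fintype.card (Fin s × ((Fin n × Fin n) ⊕ (Fin n ⊕ Fin n))),
    fun t c => ∑ i, x (e.symm t).1 (c.1, i) * y (e.symm t).2 i c.2, ?_, ?_⟩
  · intro t c
    exact Finset.sum_nonneg fun i _ => mul_nonneg (hxnn _ _) (hynn _ _ _)
  · rintro ⟨a,p⟩ ⟨b,q⟩
    dsimp only
    rw [idTensor_entry]
    have h1 : ∀ i j, X (a,i) (b,j) * Φ (single i j 1) p q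
        = (((∑ σ, x σ (a,i) * x σ (b,j)) * γ i p j q : ℝ) : ℂ) := by
      intro i j
      rw [hxe (a,i) (b,j), hγ]
      push_cast
      ring
    simp only [h1]
    simp only [← Complex.ofReal_sum]
    have hreal : ∑ i, ∑ j, (∑ σ, x σ (a,i) * x σ (b,j)) * γ i p j q
        = ∑ t, (∑ i, x (e.symm t).1 (a,i) * y (e.symm t).2 i p)
            * (∑ j, x (e.symm t).1 (b,j) * y (e.symm t).2 j q) := by
      rw [← Equiv.sum_comp e (fun t => (∑ i, x (e.symm t).1 (a,i) * y (e.symm t).2 i p)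
            * (∑ j, x (e.symm t).1 (b,j) * y (e.symm t).2 j q))]
      simp only [Equiv.symm_apply_apply]
      rw [Fintype.sum_prod_type]
      have lhs1 : ∀ i j, (∑ σ, x σ (a,i) * x σ (b,j)) * γ i p j q
          = ∑ σ, ∑ t, (x σ (a,i) * y t i p) * (x σ (b,j) * y t j q) := by
        intro i j
        rw [← key i p j q, Finset.sum_mul_sum]
        exact Finset.sum_congr rfl fun σ _ => Finset.sum_congr rfl fun t _ => by ring
      have rhs1 : ∀ (σ : Fin s) (t : (Fin n × Fin n) ⊕ (Fin n ⊕ Fin n)),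
          (∑ i, x σ (a,i) * y t i p) * (∑ j, x σ (b,j) * y t j q)
          = ∑ i, ∑ j, (x σ (a,i) * y t i p) * (x σ (b,j) * y t j q) := by
        intro σ t
        rw [Finset.sum_mul_sum]
      calc ∑ i, ∑ j, (∑ σ, x σ (a,i) * x σ (b,j)) * γ i p j q
          = ∑ i, ∑ j, ∑ σ, ∑ t, (x σ (a,i) * y t i p) * (x σ (b,j) * y t j q) :=
            Finset.sum_congr rfl fun i _ => Finset.sum_congr rfl fun j _ => lhs1 i j
        _ = ∑ σ, ∑ t, ∑ i, ∑ j, (x σ (a,i) * y t i p) * (x σ (b,j) * y t j q) := swap4 _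
        _ = ∑ σ, ∑ t, (∑ i, x σ (a,i) * y t i p) * (∑ j, x σ (b,j) * y t j q) :=
            Finset.sum_congr rfl fun σ _ => Finset.sum_congr rfl fun t _ => (rhs1 σ t).symm
    exact_mod_cast congrArg (Complex.ofReal) hreal

end dir2


/-- For quantum channels `Φ : Mₙ(ℂ) → M₂(ℂ)`, being CPDNN is equivalent to
being CPCP. -/
theorem stmt9 (n : ℕ)
    (Φ : Matrix (Fin n) (Fin n) ℂ →ₗ[ℂ] Matrix (Fin 2) (Fin 2) ℂ)
    (hCP : IsCPMap Φ) (hTP : IsTP Φ) :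
    IsCPDNN Φ ↔ IsCPCP Φ :=
  ⟨fun h => cpdnn_to_cpcp Φ hCP hTP h, fun h => cpcp_to_cpdnn Φ hCP h⟩
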